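/- Let C be a category with a natural transformation F of the identity functor, and let f : T → S be a morphism in C such that C admits pullbacks along f and along all F_S^n. Then the base-change functor f* : C_{/S} → C_{/T} extends to a functor 𝖿* between the fairies (semi-linear slice categories) C_{/S}^{(F)} → C_{/T}^{(F)}: for every arrow (g,n) : U → V in C_{/S}^{(F)} (meaning g : U → V in C with q_V ∘ g = F_S^n ∘ q_U) there is a unique induced arrow 𝖿*(g,n) : f*U → f*V lying over F_T^n, and this assignment is functorial and restricts to f* on linear arrows. -/

import Mathlib

open CategoryTheory CategoryTheory.Limits

universe v u

variable {C : Type u} [Category.{v} C]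

/-- The `n`-th power `F_S^n : S ⟶ S` of the component at `S` of an endomorphism `F` of the
identity functor. -/
def Fpow (F : 𝟭 C ⟶ 𝟭 C) (S : C) : ℕ → (S ⟶ S)
  | 0 => 𝟙 S
  | n + 1 => Fpow F S n ≫ F.app S

theorem Fpow_zero (F : 𝟭 C ⟶ 𝟭 C) (S : C) : Fpow F S 0 = 𝟙 S := rfl

theorem Fpow_comp (F : 𝟭 C ⟶ 𝟭 C) (S : C) (m n : ℕ) :
    Fpow F S m ≫ Fpow F S n = Fpow F S (m + n) := by
  induction n with
  | zero => simp [Fpow]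
  | succ n ih =>
      rw [show Fpow F S (n + 1) = Fpow F S n ≫ F.app S from rfl, ← Category.assoc, ih]
      rfl

/-- The objects of the fairy (semi-linear slice category) `C_{/S}^{(F)}`: morphisms
`q : X ⟶ S`. -/
structure Fairy (F : 𝟭 C ⟶ 𝟭 C) (S : C) where
  X : C
  q : X ⟶ S

namespace Fairy

variable {F : 𝟭 C ⟶ 𝟭 C} {S : C}

/-- Morphisms of the fairy: pairs `(g, n)` with `q_B ∘ g = F_S^n ∘ q_A`. -/
structure Hom (A B : Fairy F S) where
  g : A.X ⟶ B.X
  n : ℕ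
  w : g ≫ B.q = A.q ≫ Fpow F S n

theorem Hom.ext' {A B : Fairy F S} {f g : Hom A B} (h1 : f.g = g.g) (h2 : f.n = g.n) :
    f = g := by
  cases f; cases g
  cases h2; cases h1; rfl

instance : Category (Fairy F S) where
  Hom := Hom
  id A := ⟨𝟙 A.X, 0, by simp [Fpow_zero]⟩
  comp {A B D} f g := ⟨f.g ≫ g.g, f.n + g.n, by
    rw [Category.assoc, g.w, ← Category.assoc, f.w, Category.assoc, Fpow_comp]⟩
  id_comp f := Hom.ext' (Category.id_comp _) (Nat.zero_add _)
  comp_id f := Hom.ext' (Category.comp_id _) (Nat.add_zero _)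
  assoc f g h := Hom.ext' (Category.assoc _ _ _) (Nat.add_assoc _ _ _)

end Fairy

/-- Base change along `f : T ⟶ S` extends from the slice categories to the
fairies: for every semi-linear arrow `(g, n) : A ⟶ B` over `F_S^n` there is a unique induced
arrow `f*A ⟶ f*B` lying over `F_T^n` and compatible with `g`; this assignment is functorial
and agrees with `f*` (i.e. `pullback.map`) on linear arrows (`n = 0`). -/
theorem fairy_baseChange (F : 𝟭 C ⟶ 𝟭 C) {S T : C} (f : T ⟶ S)
    [∀ (X : C) (q : X ⟶ S), HasPullback q f] :
    ∃ Fmap : ∀ (A B : Fairy F S), (A ⟶ B) → (pullback A.q f ⟶ pullback B.q f),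
      (∀ (A B : Fairy F S) (h : A ⟶ B),
          Fmap A B h ≫ pullback.fst B.q f = pullback.fst A.q f ≫ h.g ∧
          Fmap A B h ≫ pullback.snd B.q f = pullback.snd A.q f ≫ Fpow F T h.n) ∧
      (∀ (A B : Fairy F S) (h : A ⟶ B) (h' : pullback A.q f ⟶ pullback B.q f),
          h' ≫ pullback.fst B.q f = pullback.fst A.q f ≫ h.g →
          h' ≫ pullback.snd B.q f = pullback.snd A.q f ≫ Fpow F T h.n →
          h' = Fmap A B h) ∧
      (∀ A : Fairy F S, Fmap A A (𝟙 A) = 𝟙 (pullback A.q f)) ∧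
      (∀ (A B D : Fairy F S) (h₁ : A ⟶ B) (h₂ : B ⟶ D),
          Fmap A D (h₁ ≫ h₂) = Fmap A B h₁ ≫ Fmap B D h₂) ∧
      (∀ (A B : Fairy F S) (h : A ⟶ B) (hn : h.n = 0),
          Fmap A B h = pullback.map A.q f B.q f h.g (𝟙 T) (𝟙 S)
            (by rw [Category.comp_id, h.w, hn, Fpow_zero, Category.comp_id])
            (by simp)) := by
  have hnat : ∀ n : ℕ, Fpow F T n ≫ f = f ≫ Fpow F S n := by
    intro n
    induction n with
    | zero => simp [Fpow_zero]
    | succ n ih =>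
        have hF : F.app T ≫ f = f ≫ F.app S := by
          have := F.naturality f; simpa using this.symm
        show (Fpow F T n ≫ F.app T) ≫ f = f ≫ Fpow F S n ≫ F.app S
        rw [Category.assoc, hF, ← Category.assoc, ih, Category.assoc]
  have hw : ∀ (A B : Fairy F S) (h : A ⟶ B),
      (pullback.fst A.q f ≫ h.g) ≫ B.q = (pullback.snd A.q f ≫ Fpow F T h.n) ≫ f := by
    intro A B h
    rw [Category.assoc, h.w, ← Category.assoc, pullback.condition, Category.assoc,
      Category.assoc, hnat]
  refine ⟨fun A B h => pullback.lift _ _ (hw A B h), fun A B h => ⟨pullback.lift_fst _ _ _, pullback.lift_snd _ _ _⟩,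
    fun A B h h' e1 e2 => pullback.hom_ext (by rw [pullback.lift_fst]; exact e1) (by rw [pullback.lift_snd]; exact e2),
    fun A => ?_, fun A B D h₁ h₂ => ?_, fun A B h hn => ?_⟩
  · apply pullback.hom_ext <;> simp only [pullback.lift_fst, pullback.lift_snd, Category.id_comp] <;> exact Category.comp_id _
  · apply pullback.hom_ext <;> simp only [pullback.lift_fst, pullback.lift_snd, pullback.lift_fst_assoc, pullback.lift_snd_assoc, Category.assoc]
    · rfl
    · show pullback.snd A.q f ≫ Fpow F T (h₁.n + h₂.n) =
        pullback.snd A.q f ≫ Fpow F T h₁.n ≫ Fpow F T h₂.n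
      rw [Fpow_comp]
  · apply pullback.hom_ext <;> simp [hn, Fpow_zero, pullback.lift_fst, pullback.lift_snd]
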